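/- Let p be a prime and let A be a commutative ring that is almost Frobenius separated, i.e. there exists a nilpotent ideal 𝔫 of A with p·1_A ∈ 𝔫 such that A/𝔫 is Frobenius separated. Let 𝔞 ⊆ A be an ideal that is idempotent (𝔞 = 𝔞²) and bounded nilpotent (there exists m ≥ 1 with x^m = 0 for all x ∈ 𝔞). Then 𝔞 = 0. -/

import Mathlib

/-- The ideal `ker(F_R^n) = {x : R | x^(p^n) = 0}` of a ring of characteristic `p`
(realized as the ideal generated by that set). -/
def frobeniusPowerKernel (p : ℕ) (R : Type*) [CommRing R] (n : ℕ) : Ideal R :=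
  Ideal.span {x : R | x ^ p ^ n = 0}

/-- A ring `R` (of characteristic `p`) is Frobenius separated if for every `n ≥ 1`
the intersection of all powers of `ker(F_R^n)` is zero. -/
def IsFrobeniusSeparated (p : ℕ) (R : Type*) [CommRing R] : Prop :=
  ∀ n : ℕ, 1 ≤ n → (⨅ m ≥ 1, frobeniusPowerKernel p R n ^ m) = ⊥

/-- A ring `R` is almost Frobenius separated if there is a nilpotent ideal `𝔞`
containing `p` such that `R/𝔞` is Frobenius separated. -/
def IsAlmostFrobeniusSeparated (p : ℕ) (R : Type*) [CommRing R] : Prop :=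
  ∃ 𝔞 : Ideal R, IsNilpotent 𝔞 ∧ (p : R) ∈ 𝔞 ∧ IsFrobeniusSeparated p (R ⧸ 𝔞)

/-- Lemma C.5: in an almost Frobenius separated ring, an idempotent and bounded
nilpotent ideal is zero. -/
theorem ideal_eq_bot_of_idempotent_of_boundedNilpotent
    (p : ℕ) (hp : p.Prime) (A : Type*) [CommRing A]
    (hA : IsAlmostFrobeniusSeparated p A)
    (𝔞 : Ideal A) (hidem : 𝔞 = 𝔞 ^ 2)
    (m : ℕ) (hm : 1 ≤ m) (hbd : ∀ x ∈ 𝔞, x ^ m = 0) :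
    𝔞 = ⊥ := by
  obtain ⟨𝔫, ⟨k, hk⟩, hpmem, hFs⟩ := hA
  -- idempotency: 𝔞 = 𝔞 ^ (j+1) for all j
  have hpow : ∀ j : ℕ, 𝔞 ^ (j + 1) = 𝔞 := by
    intro j
    induction j with
    | zero => simp
    | succ j ih =>
      calc 𝔞 ^ (j + 2) = 𝔞 ^ (j + 1) * 𝔞 := by ring
        _ = 𝔞 * 𝔞 := by rw [ih]
        _ = 𝔞 := by rw [← sq, ← hidem]
  set f := Ideal.Quotient.mk 𝔫 with hf
  set K := frobeniusPowerKernel p (A ⧸ 𝔫) m with hK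
  -- image of 𝔞 lands in K
  have hmle : m ≤ p ^ m := le_trans (Nat.le_of_lt (Nat.lt_two_pow_self (n := m)))
    (Nat.pow_le_pow_left hp.two_le m)
  have hsub : Ideal.map f 𝔞 ≤ K := by
    rw [Ideal.map_le_iff_le_comap]
    intro x hx
    have : (f x) ^ p ^ m = 0 := by
      rw [← map_pow, ← Nat.sub_add_cancel hmle, pow_add, hbd x hx, mul_zero, map_zero]
    exact Ideal.subset_span this
  -- hence image lies in every power of K
  have hinf : Ideal.map f 𝔞 ≤ ⨅ j ≥ 1, K ^ j := by
    refine le_iInf fun j => le_iInf fun hj => ?_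
    have : Ideal.map f 𝔞 = (Ideal.map f 𝔞) ^ j := by
      conv_lhs => rw [← hpow (j - 1), Nat.sub_add_cancel hj, Ideal.map_pow]
    rw [this]
    exact Ideal.pow_right_mono hsub j
  rw [hFs m hm] at hinf
  have hmapbot : Ideal.map f 𝔞 = ⊥ := le_bot_iff.mp hinf
  -- so 𝔞 ≤ 𝔫
  have hle : 𝔞 ≤ 𝔫 := by
    intro x hx
    have : f x ∈ Ideal.map f 𝔞 := Ideal.mem_map_of_mem f hx
    rw [hmapbot, Ideal.mem_bot] at this
    exact (Ideal.Quotient.eq_zero_iff_mem).mp this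
  -- conclude via nilpotency of 𝔫
  have : 𝔞 ≤ ⊥ := by
    calc 𝔞 = 𝔞 ^ (k + 1) := (hpow k).symm
      _ ≤ 𝔫 ^ (k + 1) := Ideal.pow_right_mono hle (k + 1)
      _ ≤ 𝔫 ^ k := Ideal.pow_le_pow_right (Nat.le_succ k)
      _ = ⊥ := hk
  exact le_bot_iff.mp this
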